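/- arXiv:1305.1093 — 2 statements merged into one kernel-verified Lean document; each statement's English description precedes it below -/
import Mathlib

section
/- The Crank–Nicolson finite difference scheme for the 1D NLSE with homogeneous Dirichlet boundary conditions conserves the discrete mass: if (ψ_j^{n+1}) satisfies the CNFD equations, then h∑_{j=1}^{J−1} |ψ_j^{n+1}|² = h∑_{j=1}^{J−1} |ψ_j^n|². -/
open Complex

lemma aux_im (J : ℕ) (hJ : 1 ≤ J) (φ : ℕ → ℂ) (h0 : φ 0 = 0) (hJ0 : φ J = 0) :
    ∑ j ∈ Finset.Ico 1 J,
      ((φ (j+1) - 2*φ j + φ (j-1)) * (starRingEnd ℂ) (φ j)).im = 0 := by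
  have hterm : ∀ j ∈ Finset.Ico 1 J,
      ((φ (j+1) - 2*φ j + φ (j-1)) * (starRingEnd ℂ) (φ j)).im
        = (fun i => (φ (i+1) * (starRingEnd ℂ) (φ i)).im) j
          - (fun i => (φ (i+1) * (starRingEnd ℂ) (φ i)).im) (j-1) := by
    intro j hj
    obtain ⟨h1, _⟩ := Finset.mem_Ico.mp hj
    have hj1 : j - 1 + 1 = j := Nat.succ_pred_eq_of_pos h1
    simp only [hj1]
    simp [Complex.mul_im, Complex.mul_re, Complex.sub_re, Complex.sub_im,
      Complex.add_re, Complex.add_im, Complex.conj_re, Complex.conj_im]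
    ring
  rw [Finset.sum_congr rfl hterm, Finset.sum_Ico_eq_sum_range]
  have : ∀ i ∈ Finset.range (J - 1),
      ((fun i => (φ (i+1) * (starRingEnd ℂ) (φ i)).im) (1 + i)
        - (fun i => (φ (i+1) * (starRingEnd ℂ) (φ i)).im) (1 + i - 1))
      = ((fun i => (φ (i+1) * (starRingEnd ℂ) (φ i)).im) (i + 1)
        - (fun i => (φ (i+1) * (starRingEnd ℂ) (φ i)).im) i) := by
    intro i _
    simp [Nat.add_comm 1 i]
  rw [Finset.sum_congr rfl this,
    Finset.sum_range_sub (fun i => (φ (i+1) * (starRingEnd ℂ) (φ i)).im)]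
  have hJ1 : J - 1 + 1 = J := Nat.succ_pred_eq_of_pos hJ
  simp [hJ1, hJ0, h0]

/-- The Crank–Nicolson finite difference (CNFD) scheme for the 1D NLSE with
homogeneous Dirichlet boundary conditions conserves the discrete mass:
`h ∑_{j=1}^{J−1} |ψ_j^{n+1}|² = h ∑_{j=1}^{J−1} |ψ_j^n|²`.  Here `a = ψ^n` and
`b = ψ^{n+1}`, and `G(ρ₁,ρ₂) = ∫₀¹ f(θρ₁ + (1−θ)ρ₂) dθ`. -/
theorem cnfd_mass_conservation
    (ε τ h : ℝ) (hε : 0 < ε) (hτ : 0 < τ) (hh : 0 < h)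
    (J : ℕ) (hJ : 2 ≤ J) (V : ℕ → ℝ) (f : ℝ → ℝ) (hf : Continuous f)
    (a b : ℕ → ℂ)
    (ha0 : a 0 = 0) (haJ : a J = 0) (hb0 : b 0 = 0) (hbJ : b J = 0)
    (hscheme : ∀ j, 1 ≤ j → j ≤ J - 1 →
      Complex.I * (ε : ℂ) * (b j - a j) / (τ : ℂ)
        = -((ε : ℂ) ^ 2 / 4) *
            ((b (j + 1) - 2 * b j + b (j - 1)) / (h : ℂ) ^ 2
              + (a (j + 1) - 2 * a j + a (j - 1)) / (h : ℂ) ^ 2)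
          + ((V j + ∫ θ in (0 : ℝ)..1,
                f (θ * ‖b j‖ ^ 2 + (1 - θ) * ‖a j‖ ^ 2) : ℝ) : ℂ)
            * (b j + a j) / 2) :
    h * ∑ j ∈ Finset.Ico 1 J, ‖b j‖ ^ 2
      = h * ∑ j ∈ Finset.Ico 1 J, ‖a j‖ ^ 2 := by
  have hτ0 : (τ : ℂ) ≠ 0 := by exact_mod_cast hτ.ne'
  have hh0 : (h : ℂ) ≠ 0 := by exact_mod_cast hh.ne'
  set φ : ℕ → ℂ := fun j => b j + a j with hφ
  set c : ℕ → ℝ := fun j => V j + ∫ θ in (0 : ℝ)..1,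
      f (θ * ‖b j‖ ^ 2 + (1 - θ) * ‖a j‖ ^ 2) with hc
  -- per-term identity after multiplying the scheme by conj (φ j)
  have key : ∀ j ∈ Finset.Ico 1 J,
      Complex.I * (ε : ℂ) / (τ : ℂ) * ((b j - a j) * (starRingEnd ℂ) (φ j))
        = (-(((ε : ℝ)^2 / (4 * h^2) : ℝ) : ℂ)) *
            ((φ (j+1) - 2 * φ j + φ (j-1)) * (starRingEnd ℂ) (φ j))
          + ((c j : ℂ) / 2) * (φ j * (starRingEnd ℂ) (φ j)) := by
    intro j hj
    obtain ⟨h1, h2⟩ := Finset.mem_Ico.mp hj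
    have hs := hscheme j h1 (Nat.le_sub_one_of_lt h2)
    simp only [hφ, hc, Complex.ofReal_div, Complex.ofReal_pow, Complex.ofReal_mul,
      Complex.ofReal_ofNat]
    linear_combination (starRingEnd ℂ) (b j + a j) * hs
  have hsum := Finset.sum_congr rfl key
  have him := congrArg Complex.im hsum
  rw [← Finset.mul_sum] at him
  rw [Complex.im_sum] at him
  -- RHS imaginary part is zero
  have hrhs : ∑ j ∈ Finset.Ico 1 J,
      ((-(((ε : ℝ)^2 / (4 * h^2) : ℝ) : ℂ)) *
            ((φ (j+1) - 2 * φ j + φ (j-1)) * (starRingEnd ℂ) (φ j))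
          + ((c j : ℂ) / 2) * (φ j * (starRingEnd ℂ) (φ j))).im = 0 := by
    have e1 : ∀ j, ((-(((ε : ℝ)^2 / (4 * h^2) : ℝ) : ℂ)) *
            ((φ (j+1) - 2 * φ j + φ (j-1)) * (starRingEnd ℂ) (φ j))
          + ((c j : ℂ) / 2) * (φ j * (starRingEnd ℂ) (φ j))).im
        = (-(ε^2 / (4 * h^2))) *
            ((φ (j+1) - 2 * φ j + φ (j-1)) * (starRingEnd ℂ) (φ j)).im := by
      intro j
      rw [Complex.mul_conj, Complex.add_im]
      have h2 : (((c j : ℂ)) / 2 * ((Complex.normSq (φ j) : ℝ) : ℂ)).im = 0 := by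
        rw [show ((c j : ℂ)) / 2 * ((Complex.normSq (φ j) : ℝ) : ℂ)
            = ((c j / 2 * Complex.normSq (φ j) : ℝ) : ℂ) by push_cast; ring]
        exact Complex.ofReal_im _
      rw [h2, add_zero,
        show (-(((ε : ℝ)^2 / (4 * h^2) : ℝ) : ℂ)) = ((-(ε^2 / (4 * h^2)) : ℝ) : ℂ) by
          push_cast; ring]
      rw [Complex.mul_im]
      simp only [Complex.ofReal_re, Complex.ofReal_im, zero_mul, add_zero]
    simp only [e1]
    rw [← Finset.mul_sum, aux_im J (by omega) φ (by simp [hφ, ha0, hb0])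
      (by simp [hφ, haJ, hbJ]), mul_zero]
  rw [hrhs] at him
  -- LHS imaginary part gives Re of the mass difference
  have hre : (∑ j ∈ Finset.Ico 1 J, ((b j - a j) * (starRingEnd ℂ) (φ j))).re
      = ∑ j ∈ Finset.Ico 1 J, (‖b j‖ ^ 2 - ‖a j‖ ^ 2) := by
    rw [Complex.re_sum]
    refine Finset.sum_congr rfl (fun j _ => ?_)
    simp only [hφ, Complex.sq_norm, Complex.normSq_apply, Complex.mul_re,
      Complex.sub_re, Complex.sub_im, Complex.add_re, Complex.add_im,
      Complex.conj_re, Complex.conj_im]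
    ring
  have hlhs : (Complex.I * (ε : ℂ) / (τ : ℂ) *
      ∑ j ∈ Finset.Ico 1 J, ((b j - a j) * (starRingEnd ℂ) (φ j))).im
      = (ε / τ) * (∑ j ∈ Finset.Ico 1 J, ((b j - a j) * (starRingEnd ℂ) (φ j))).re := by
    have : Complex.I * (ε : ℂ) / (τ : ℂ) = ((ε / τ : ℝ) : ℂ) * Complex.I := by
      push_cast; ring
    rw [this]
    simp [Complex.mul_im, Complex.mul_re]
  rw [hlhs, hre] at him
  have hετ : ε / τ ≠ 0 := div_ne_zero hε.ne' hτ.ne'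
  have hzero : ∑ j ∈ Finset.Ico 1 J,
      (‖b j‖ ^ 2 - ‖a j‖ ^ 2) = 0 :=
    (mul_eq_zero.mp him).resolve_left hετ
  rw [Finset.sum_sub_distrib, sub_eq_zero] at hzero
  rw [hzero]
end

section
/- The relaxation finite difference scheme for the 1D NLSE conserves the discrete mass: h∑_{j=1}^{J−1} |ψ_j^{n+1}|² = h∑_{j=1}^{J−1} |ψ_j^n|². -/
open Complex

/-- The relaxation finite difference (ReFD) scheme for the 1D NLSE with
homogeneous Dirichlet boundary conditions conserves the discrete mass:
`h ∑_{j=1}^{J−1} |ψ_j^{n+1}|² = h ∑_{j=1}^{J−1} |ψ_j^n|²`.  Here `a = ψ^n`,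
`b = ψ^{n+1}`, and `u = u^{n+1/2}` is the real relaxation variable determined
by `(u^{n+1/2}_j + u^{n−1/2}_j)/2 = f(|ψ_j^n|²)`. -/
theorem refd_mass_conservation
    (ε τ h : ℝ) (hε : 0 < ε) (hτ : 0 < τ) (hh : 0 < h)
    (J : ℕ) (hJ : 2 ≤ J) (V : ℕ → ℝ) (f : ℝ → ℝ)
    (u uprev : ℕ → ℝ)
    (a b : ℕ → ℂ)
    (ha0 : a 0 = 0) (haJ : a J = 0) (hb0 : b 0 = 0) (hbJ : b J = 0)
    (hrelax : ∀ j, 1 ≤ j → j ≤ J - 1 →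
      (u j + uprev j) / 2 = f (‖a j‖ ^ 2))
    (hscheme : ∀ j, 1 ≤ j → j ≤ J - 1 →
      Complex.I * (ε : ℂ) * (b j - a j) / (τ : ℂ)
        = -((ε : ℂ) ^ 2 / 4) *
            ((b (j + 1) - 2 * b j + b (j - 1)) / (h : ℂ) ^ 2
              + (a (j + 1) - 2 * a j + a (j - 1)) / (h : ℂ) ^ 2)
          + (1 / 2 : ℂ) * ((V j + u j : ℝ) : ℂ) * (b j + a j)) :
    h * ∑ j ∈ Finset.Ico 1 J, ‖b j‖ ^ 2
      = h * ∑ j ∈ Finset.Ico 1 J, ‖a j‖ ^ 2 := by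
  have hτ0 : (τ : ℂ) ≠ 0 := Complex.ofReal_ne_zero.2 hτ.ne'
  have hh0 : (h : ℂ) ≠ 0 := Complex.ofReal_ne_zero.2 hh.ne'
  set s : ℕ → ℂ := fun j => b j + a j with hsdef
  have hs0 : s 0 = 0 := by simp [hsdef, ha0, hb0]
  have hsJ : s J = 0 := by simp [hsdef, haJ, hbJ]
  -- cleared, conjugate-multiplied scheme
  have hsch : ∀ j ∈ Finset.Ico 1 J,
      Complex.I * ((ε * h ^ 2 : ℝ) : ℂ) * ((b j - a j) * (starRingEnd ℂ) (s j)) =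
        ((-(ε ^ 2 / 4) * τ : ℝ) : ℂ) *
            ((s (j + 1) - 2 * s j + s (j - 1)) * (starRingEnd ℂ) (s j))
          + ((τ * h ^ 2 / 2 : ℝ) : ℂ) *
            (((V j + u j : ℝ) : ℂ) * (s j * (starRingEnd ℂ) (s j))) := by
    intro j hj
    rw [Finset.mem_Ico] at hj
    have e := hscheme j hj.1 (Nat.le_sub_one_of_lt hj.2)
    field_simp at e
    simp only [hsdef]
    push_cast at e ⊢
    linear_combination ((starRingEnd ℂ) (b j + a j) / 8) * e
  set S := ∑ j ∈ Finset.Ico 1 J, (b j - a j) * (starRingEnd ℂ) (s j) with hS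
  set T := ∑ j ∈ Finset.Ico 1 J,
      (s (j + 1) - 2 * s j + s (j - 1)) * (starRingEnd ℂ) (s j) with hT
  set W := ∑ j ∈ Finset.Ico 1 J,
      (((V j + u j : ℝ) : ℂ) * (s j * (starRingEnd ℂ) (s j))) with hW
  have hsum : Complex.I * ((ε * h ^ 2 : ℝ) : ℂ) * S
      = ((-(ε ^ 2 / 4) * τ : ℝ) : ℂ) * T + ((τ * h ^ 2 / 2 : ℝ) : ℂ) * W := by
    rw [hS, hT, hW, Finset.mul_sum, Finset.mul_sum, Finset.mul_sum,
      ← Finset.sum_add_distrib]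
    exact Finset.sum_congr rfl hsch
  have hWim : W.im = 0 := by
    rw [hW, Complex.im_sum]
    refine Finset.sum_eq_zero fun j _ => ?_
    simp [Complex.mul_conj]
  have hshift : ∑ j ∈ Finset.Ico 1 J, s (j - 1) * (starRingEnd ℂ) (s j)
      = (starRingEnd ℂ) (∑ j ∈ Finset.Ico 1 J, s (j + 1) * (starRingEnd ℂ) (s j)) := by
    rw [map_sum]
    simp only [map_mul, Complex.conj_conj]
    rw [Finset.sum_Ico_eq_sum_range, Finset.sum_Ico_eq_sum_range]
    obtain ⟨n, hn⟩ : ∃ n, J - 1 = n + 1 := ⟨J - 2, by omega⟩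
    rw [hn, Finset.sum_range_succ', Finset.sum_range_succ]
    have e1 : (1 + 0 - 1 : ℕ) = 0 := rfl
    have e2 : 1 + n + 1 = J := by omega
    rw [e1, hs0, e2, hsJ]
    simp only [zero_mul, map_zero, add_zero]
    refine Finset.sum_congr rfl fun i _ => ?_
    rw [show 1 + (i + 1) - 1 = i + 1 from by omega,
      show 1 + (i + 1) = i + 1 + 1 from by omega,
      show 1 + i + 1 = i + 1 + 1 from by omega,
      show 1 + i = i + 1 from by omega]
    ring
  have hTim : T.im = 0 := by
    have hTsplit : T = (∑ j ∈ Finset.Ico 1 J, s (j + 1) * (starRingEnd ℂ) (s j))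
        + (∑ j ∈ Finset.Ico 1 J, s (j - 1) * (starRingEnd ℂ) (s j))
        - 2 * ∑ j ∈ Finset.Ico 1 J, s j * (starRingEnd ℂ) (s j) := by
      rw [hT, Finset.mul_sum, ← Finset.sum_add_distrib, ← Finset.sum_sub_distrib]
      exact Finset.sum_congr rfl fun j _ => by ring
    have hCim : (∑ j ∈ Finset.Ico 1 J, s j * (starRingEnd ℂ) (s j)).im = 0 := by
      rw [Complex.im_sum]
      refine Finset.sum_eq_zero fun j _ => ?_
      simp [Complex.mul_conj]
    rw [hTsplit, hshift]
    simp only [Complex.sub_im, Complex.add_im, Complex.conj_im, Complex.mul_im,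
      Complex.conj_re, Complex.im_sum, hCim, mul_zero, sub_zero]
    simp
  have hSre : S.re = 0 := by
    have him := congrArg Complex.im hsum
    simp only [Complex.mul_im, Complex.add_im, Complex.mul_re, Complex.I_re,
      Complex.I_im, Complex.ofReal_re, Complex.ofReal_im, hTim, hWim,
      mul_zero, zero_mul, add_zero, zero_add, one_mul, zero_sub, sub_zero,
      mul_one, neg_zero] at him
    have hpos : (0:ℝ) < ε * h ^ 2 := mul_pos hε (pow_pos hh 2)
    nlinarith [him]
  have hre : S.re = ∑ j ∈ Finset.Ico 1 J,
      (‖b j‖ ^ 2 - ‖a j‖ ^ 2) := by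
    rw [hS, Complex.re_sum]
    refine Finset.sum_congr rfl fun j _ => ?_
    simp only [hsdef, Complex.sq_norm, Complex.normSq_apply, Complex.mul_re,
      Complex.sub_re, Complex.sub_im, Complex.add_re, Complex.add_im,
      Complex.conj_re, Complex.conj_im]
    ring
  rw [hre, Finset.sum_sub_distrib] at hSre
  have := sub_eq_zero.mp hSre
  rw [this]
end
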